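/- Let p ∈ (0,1), q = 1 − p, and let (S_n, K_n)_{n≥0} be a random trie pair family with parameter p. Set μ(n) = E(S_n), ν(n) = E(K_n), and define the entire functions f̃₁₀(z) = e^{−z} Σ_{n≥0} μ(n) zⁿ/n! and f̃₀₁(z) = e^{−z} Σ_{n≥0} ν(n) zⁿ/n!. Then for all z ∈ ℂ: f̃₁₀(z) = f̃₁₀(pz) + f̃₁₀(qz) + 1 − (1 + z)e^{−z}, and f̃₀₁(z) = f̃₀₁(pz) + f̃₀₁(qz) + z(1 − e^{−z}). -/

import Mathlib

open MeasureTheory ProbabilityTheory Filter Topology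

noncomputable def binomialMeasure (n : ℕ) (p : ℝ) : Measure ℕ :=
  ∑ k ∈ Finset.range (n + 1),
    (ENNReal.ofReal ((n.choose k : ℝ) * p ^ k * (1 - p) ^ (n - k))) • Measure.dirac k

/-- The combination map `(B, (S',K')_j, (S'',K'')_j) ↦ (S'_B + S''_{n-B} + 1, K'_B + K''_{n-B} + n)`. -/
def trieStep (n : ℕ) (ω : ℕ × ((ℕ → ℕ × ℕ) × (ℕ → ℕ × ℕ))) : ℕ × ℕ :=
  ((ω.2.1 ω.1).1 + (ω.2.2 (n - ω.1)).1 + 1,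
   (ω.2.1 ω.1).2 + (ω.2.2 (n - ω.1)).2 + n)

/-- A random trie pair family with parameter `p`, given by the joint laws
`μ n` of `(S_n, K_n)` on `ℕ × ℕ`. -/
structure IsTriePairFamily (p : ℝ) (μ : ℕ → Measure (ℕ × ℕ)) : Prop where
  prob : ∀ n, IsProbabilityMeasure (μ n)
  moments : ∀ n r : ℕ, Integrable (fun x : ℕ × ℕ => ((x.1 : ℝ) + (x.2 : ℝ)) ^ r) (μ n)
  init0 : μ 0 = Measure.dirac (0, 0)
  init1 : μ 1 = Measure.dirac (0, 0)
  recur : ∀ n, 2 ≤ n → ∃ P : Measure (ℕ × ((ℕ → ℕ × ℕ) × (ℕ → ℕ × ℕ))),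
    IsProbabilityMeasure P ∧
    P.map Prod.fst = binomialMeasure n p ∧
    (∀ j, P.map (fun ω => ω.2.1 j) = μ j) ∧
    (∀ j, P.map (fun ω => ω.2.2 j) = μ j) ∧
    P = (P.map Prod.fst).prod
          ((P.map (fun ω => ω.2.1)).prod (P.map (fun ω => ω.2.2))) ∧
    μ n = P.map (trieStep n)

noncomputable def eS (μ : ℕ → Measure (ℕ × ℕ)) (n : ℕ) : ℝ := ∫ x, (x.1 : ℝ) ∂ μ n

noncomputable def eK (μ : ℕ → Measure (ℕ × ℕ)) (n : ℕ) : ℝ := ∫ x, (x.2 : ℝ) ∂ μ n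

noncomputable def varS (μ : ℕ → Measure (ℕ × ℕ)) (n : ℕ) : ℝ :=
  ∫ x, ((x.1 : ℝ) - eS μ n) ^ 2 ∂ μ n

noncomputable def varK (μ : ℕ → Measure (ℕ × ℕ)) (n : ℕ) : ℝ :=
  ∫ x, ((x.2 : ℝ) - eK μ n) ^ 2 ∂ μ n

noncomputable def covSK (μ : ℕ → Measure (ℕ × ℕ)) (n : ℕ) : ℝ :=
  ∫ x, ((x.1 : ℝ) - eS μ n) * ((x.2 : ℝ) - eK μ n) ∂ μ n

noncomputable def eSK (μ : ℕ → Measure (ℕ × ℕ)) (n : ℕ) : ℝ :=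
  ∫ x, (x.1 : ℝ) * (x.2 : ℝ) ∂ μ n

/-- Poisson generating function of `E(S_n)`. -/
noncomputable def pgfS (μ : ℕ → Measure (ℕ × ℕ)) (z : ℂ) : ℂ :=
  Complex.exp (-z) * ∑' n : ℕ, (eS μ n : ℂ) * z ^ n / (n.factorial : ℂ)

/-- Poisson generating function of `E(K_n)`. -/
noncomputable def pgfK (μ : ℕ → Measure (ℕ × ℕ)) (z : ℂ) : ℂ :=
  Complex.exp (-z) * ∑' n : ℕ, (eK μ n : ℂ) * z ^ n / (n.factorial : ℂ)

/-- Poisson generating function of `E(S_n K_n)`. -/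
noncomputable def pgfSK (μ : ℕ → Measure (ℕ × ℕ)) (z : ℂ) : ℂ :=
  Complex.exp (-z) * ∑' n : ℕ, (eSK μ n : ℂ) * z ^ n / (n.factorial : ℂ)


open Finset

open MeasureTheory ProbabilityTheory Filter Topology

-- sum of binomial weights
lemma sum_w (p : ℝ) (n : ℕ) :
    ∑ k ∈ Finset.range (n+1), (n.choose k : ℝ) * p^k * (1-p)^(n-k) = 1 := by
  have h := add_pow p (1-p) n
  rw [show p + (1-p) = (1:ℝ) by ring, one_pow] at h
  rw [Finset.sum_congr rfl (fun k _ => show (n.choose k : ℝ) * p^k * (1-p)^(n-k)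
    = p^k * (1-p)^(n-k) * (n.choose k : ℝ) by ring)]
  exact h.symm

lemma summable_aux (e : ℕ → ℝ) (a : ℝ) (hnn : ∀ n, 0 ≤ e n) (hbd : ∀ n, e n ≤ a^n) (w : ℂ) :
    Summable fun n : ℕ => ‖(e n : ℂ) * w^n / (n.factorial : ℂ)‖ := by
  refine Summable.of_nonneg_of_le (fun n => norm_nonneg _) (fun n => ?_)
    (Real.summable_pow_div_factorial (a*‖w‖))
  rw [norm_div, norm_mul, norm_pow]
  have h1 : ‖(e n : ℂ)‖ = e n := by
    rw [Complex.norm_real, Real.norm_eq_abs, abs_of_nonneg (hnn n)]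
  have h2 : ‖((n.factorial : ℕ) : ℂ)‖ = (n.factorial : ℝ) := by
    rw [Complex.norm_natCast]
  rw [h1, h2, mul_pow]
  gcongr
  exact hbd n

lemma exp_tsum (z : ℂ) : Complex.exp z = ∑' n : ℕ, z^n / (n.factorial : ℂ) := by
  rw [Complex.exp_eq_exp_ℂ, NormedSpace.exp_eq_tsum_div]

lemma summable_exp_series (z : ℂ) : Summable fun n : ℕ => z^n / (n.factorial : ℂ) := by
  have := (summable_aux (fun _ => 1) 1 (fun _ => one_pos.le) (fun n => by simp) z).of_norm
  simpa using this

lemma nat_tsum (z : ℂ) : Summable (fun n : ℕ => (n:ℂ) * z^n / (n.factorial : ℂ)) ∧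
    ∑' n : ℕ, (n:ℂ) * z^n / (n.factorial : ℂ) = z * Complex.exp z := by
  have hbd : ∀ n : ℕ, (n:ℝ) ≤ 2^n := fun n => by exact_mod_cast (Nat.lt_two_pow_self (n := n)).le
  have hsum : Summable (fun n : ℕ => ((n:ℝ):ℂ) * z^n / (n.factorial : ℂ)) :=
    (summable_aux (fun n => (n:ℝ)) 2 (fun n => n.cast_nonneg) hbd z).of_norm
  have hsum' : Summable (fun n : ℕ => (n:ℂ) * z^n / (n.factorial : ℂ)) := by
    simpa using hsum
  refine ⟨hsum', ?_⟩
  rw [Summable.tsum_eq_zero_add hsum']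
  simp only [Nat.cast_zero, zero_mul, zero_div, zero_add]
  have hterm : ∀ n : ℕ, ((n+1 : ℕ):ℂ) * z^(n+1) / ((n+1).factorial : ℂ) = z * (z^n / n.factorial) := by
    intro n
    rw [Nat.factorial_succ]
    push_cast
    have h1 : ((n:ℂ) + 1) ≠ 0 := Nat.cast_add_one_ne_zero n
    have h2 : ((n.factorial : ℕ):ℂ) ≠ 0 := Nat.cast_ne_zero.mpr n.factorial_ne_zero
    field_simp
    ring
  rw [tsum_congr hterm, tsum_mul_left, ← exp_tsum]

lemma growth_bound (p : ℝ) (hp0 : 0 < p) (hp1 : p < 1) (e t : ℕ → ℝ)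
    (hnn : ∀ n, 0 ≤ e n) (h0 : e 0 = 0) (h1 : e 1 = 0)
    (ht : ∀ n, 2 ≤ n → t n ≤ n)
    (hrec : ∀ n, 2 ≤ n → e n =
      (∑ k ∈ Finset.range (n+1), ((n.choose k : ℝ) * p^k * (1-p)^(n-k)) * (e k + e (n-k))) + t n) :
    ∀ n, e n ≤ (2 / (p * (1-p))) ^ n := by
  have hq0 : 0 < 1 - p := by linarith
  set a : ℝ := 2 / (p * (1-p)) with ha
  have hpq0 : 0 < p * (1-p) := by positivity
  have hpq : p * (1-p) ≤ 1/4 := by nlinarith [sq_nonneg (p - (1-p))]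
  have ha2 : (2:ℝ) ≤ a := by
    rw [ha, le_div_iff₀ hpq0]; nlinarith
  have ha1 : (1:ℝ) ≤ a := by linarith
  have hapq : a * (p * (1-p)) = 2 := by
    rw [ha]; field_simp
  intro n
  induction n using Nat.strong_induction_on with
  | _ n ih =>
    match n, ih with
    | 0, _ => simp [h0]
    | 1, _ => rw [h1]; rw [pow_one]; linarith
    | (m+2), ih =>
      set n := m + 2 with hndef
      have hn : 2 ≤ n := by omega
      have hWnn : ∀ k, 0 ≤ (n.choose k : ℝ) * p^k * (1-p)^(n-k) := by
        intro k; positivity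
      have hW1 : ∑ k ∈ range (n+1), (n.choose k : ℝ) * p^k * (1-p)^(n-k) = 1 := sum_w p n
      -- first sum bound
      have hbd1 : ∑ k ∈ range n, ((n.choose k : ℝ) * p^k * (1-p)^(n-k)) * e k ≤ a^(m+1) := by
        calc ∑ k ∈ range n, ((n.choose k : ℝ) * p^k * (1-p)^(n-k)) * e k
            ≤ ∑ k ∈ range n, ((n.choose k : ℝ) * p^k * (1-p)^(n-k)) * a^(m+1) := by
              refine Finset.sum_le_sum fun k hk => ?_
              refine mul_le_mul_of_nonneg_left ?_ (hWnn k)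
              have hk' : k < n := Finset.mem_range.mp hk
              exact (ih k hk').trans (pow_le_pow_right₀ ha1 (by omega))
          _ = (∑ k ∈ range n, (n.choose k : ℝ) * p^k * (1-p)^(n-k)) * a^(m+1) := by
              rw [← Finset.sum_mul]
          _ ≤ 1 * a^(m+1) := by
              refine mul_le_mul_of_nonneg_right ?_ (by positivity)
              calc ∑ k ∈ range n, (n.choose k : ℝ) * p^k * (1-p)^(n-k)
                  ≤ ∑ k ∈ range (n+1), (n.choose k : ℝ) * p^k * (1-p)^(n-k) :=
                    Finset.sum_le_sum_of_subset_of_nonneg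
                      (Finset.range_subset_range.mpr (Nat.le_succ n)) (fun k _ _ => hWnn k)
                _ = 1 := hW1
          _ = a^(m+1) := one_mul _
      -- second sum bound
      have hbd2 : ∑ k ∈ range n, ((n.choose (k+1) : ℝ) * p^(k+1) * (1-p)^(n-(k+1))) * e (n-(k+1))
          ≤ a^(m+1) := by
        calc ∑ k ∈ range n, ((n.choose (k+1) : ℝ) * p^(k+1) * (1-p)^(n-(k+1))) * e (n-(k+1))
            ≤ ∑ k ∈ range n, ((n.choose (k+1) : ℝ) * p^(k+1) * (1-p)^(n-(k+1))) * a^(m+1) := by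
              refine Finset.sum_le_sum fun k hk => ?_
              refine mul_le_mul_of_nonneg_left ?_ (hWnn (k+1))
              have : n - (k+1) < n := by omega
              exact (ih _ this).trans (pow_le_pow_right₀ ha1 (by omega))
          _ = (∑ k ∈ range n, (n.choose (k+1) : ℝ) * p^(k+1) * (1-p)^(n-(k+1))) * a^(m+1) := by
              rw [← Finset.sum_mul]
          _ ≤ 1 * a^(m+1) := by
              refine mul_le_mul_of_nonneg_right ?_ (by positivity)
              have hsplit := Finset.sum_range_succ' (fun k => (n.choose k : ℝ) * p^k * (1-p)^(n-k)) n
              rw [hW1] at hsplit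
              have h0term : (0:ℝ) ≤ (n.choose 0 : ℝ) * p^0 * (1-p)^(n-0) := hWnn 0
              linarith
          _ = a^(m+1) := one_mul _
      -- split the recurrence
      have hrecn := hrec n hn
      have hsplit1 : ∑ k ∈ range (n+1), ((n.choose k : ℝ) * p^k * (1-p)^(n-k)) * (e k + e (n-k))
          = (∑ k ∈ range (n+1), ((n.choose k : ℝ) * p^k * (1-p)^(n-k)) * e k)
            + ∑ k ∈ range (n+1), ((n.choose k : ℝ) * p^k * (1-p)^(n-k)) * e (n-k) := by
        rw [← Finset.sum_add_distrib]
        exact Finset.sum_congr rfl fun k _ => by ring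
      have hS1 : ∑ k ∈ range (n+1), ((n.choose k : ℝ) * p^k * (1-p)^(n-k)) * e k
          = (∑ k ∈ range n, ((n.choose k : ℝ) * p^k * (1-p)^(n-k)) * e k) + p^n * e n := by
        rw [Finset.sum_range_succ]
        simp [Nat.choose_self]
      have hS2 : ∑ k ∈ range (n+1), ((n.choose k : ℝ) * p^k * (1-p)^(n-k)) * e (n-k)
          = (∑ k ∈ range n, ((n.choose (k+1) : ℝ) * p^(k+1) * (1-p)^(n-(k+1))) * e (n-(k+1)))
            + (1-p)^n * e n := by
        rw [Finset.sum_range_succ' (fun k => ((n.choose k : ℝ) * p^k * (1-p)^(n-k)) * e (n-k)) n]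
        simp
      -- powers comparison
      have hpn : p^n ≤ p^2 := pow_le_pow_of_le_one hp0.le hp1.le hn
      have hqn : (1-p)^n ≤ (1-p)^2 := pow_le_pow_of_le_one hq0.le (by linarith) hn
      have htn : t n ≤ n := ht n hn
      have hen : 0 ≤ e n := hnn n
      -- main inequality: 2pq * e n ≤ 2 a^(m+1) + n
      have hmain : 2 * (p*(1-p)) * e n ≤ 2 * a^(m+1) + n := by
        have heq : e n = (∑ k ∈ range n, ((n.choose k : ℝ) * p^k * (1-p)^(n-k)) * e k)
            + p^n * e n
            + ((∑ k ∈ range n, ((n.choose (k+1) : ℝ) * p^(k+1) * (1-p)^(n-(k+1))) * e (n-(k+1)))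
              + (1-p)^n * e n) + t n := by
          conv_lhs => rw [hrecn]
          rw [hsplit1, hS1, hS2]
        have h1' : e n ≤ a^(m+1) + p^n * e n + (a^(m+1) + (1-p)^n * e n) + t n := by
          linarith [heq, hbd1, hbd2]
        have hppq : p^n * e n + (1-p)^n * e n ≤ (p^2 + (1-p)^2) * e n := by
          nlinarith
        have hsq : p^2 + (1-p)^2 = 1 - 2*(p*(1-p)) := by ring
        nlinarith
      have hnle : (n:ℝ) ≤ 2 * a^(m+1) := by
        have h2n : (n:ℝ) ≤ 2^n := by exact_mod_cast (Nat.lt_two_pow_self (n := n)).le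
        have : (2:ℝ)^n = 2 * 2^(m+1) := by rw [hndef]; ring
        have h2a : (2:ℝ)^(m+1) ≤ a^(m+1) := pow_le_pow_left₀ (by norm_num) ha2 _
        linarith
      have hpow : a^n = a * a^(m+1) := by rw [hndef]; ring
      have ham : 0 < a^(m+1) := by positivity
      -- conclude
      rw [hpow]
      nlinarith [hmain, hnle, hapq, hpq0, hen]


lemma cauchy_piece (p q : ℝ) (hp : 0 ≤ p) (hq : 0 ≤ q) (e : ℕ → ℝ)
    (hnn : ∀ n, 0 ≤ e n) (a : ℝ) (ha : 0 ≤ a) (hbd : ∀ n, e n ≤ a ^ n) (z : ℂ) :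
    Summable (fun n : ℕ =>
      ((∑ k ∈ Finset.range (n+1), ((n.choose k : ℝ) * p^k * q^(n-k)) * (e k + e (n-k)) : ℝ) : ℂ)
        * z^n / (n.factorial : ℂ))
    ∧ ∑' n : ℕ,
      ((∑ k ∈ Finset.range (n+1), ((n.choose k : ℝ) * p^k * q^(n-k)) * (e k + e (n-k)) : ℝ) : ℂ)
        * z^n / (n.factorial : ℂ)
      = Complex.exp ((q:ℝ) * z) * (∑' k : ℕ, ((e k : ℝ) : ℂ) * ((p:ℝ) * z)^k / (k.factorial : ℂ))
        + Complex.exp ((p:ℝ) * z) * (∑' k : ℕ, ((e k : ℝ) : ℂ) * ((q:ℝ) * z)^k / (k.factorial : ℂ)) := by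
  set A : ℕ → ℂ := fun k => ((e k : ℝ) : ℂ) * ((p:ℝ) * z)^k / (k.factorial : ℂ) with hA
  set B : ℕ → ℂ := fun m => ((q:ℝ) * z)^m / (m.factorial : ℂ) with hB
  set A' : ℕ → ℂ := fun k => ((p:ℝ) * z)^k / (k.factorial : ℂ) with hA'
  set B' : ℕ → ℂ := fun m => ((e m : ℝ) : ℂ) * ((q:ℝ) * z)^m / (m.factorial : ℂ) with hB'
  have hAn : Summable fun k => ‖A k‖ := summable_aux e a hnn hbd _
  have hBn : Summable fun m => ‖B m‖ := by
    have := summable_aux (fun _ => 1) 1 (fun _ => one_pos.le) (fun n => by simp) ((q:ℝ) * z)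
    simpa [hB] using this
  have hA'n : Summable fun k => ‖A' k‖ := by
    have := summable_aux (fun _ => 1) 1 (fun _ => one_pos.le) (fun n => by simp) ((p:ℝ) * z)
    simpa [hA'] using this
  have hB'n : Summable fun m => ‖B' m‖ := summable_aux e a hnn hbd _
  -- key per-term identity
  have hkey : ∀ n : ℕ,
      ((∑ k ∈ Finset.range (n+1), ((n.choose k : ℝ) * p^k * q^(n-k)) * (e k + e (n-k)) : ℝ) : ℂ)
        * z^n / (n.factorial : ℂ)
      = (∑ k ∈ Finset.range (n+1), A k * B (n-k)) + ∑ k ∈ Finset.range (n+1), A' k * B' (n-k) := by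
    intro n
    rw [← Finset.sum_add_distrib]
    push_cast
    rw [Finset.sum_mul, Finset.sum_div]
    refine Finset.sum_congr rfl fun k hk => ?_
    have hkn : k ≤ n := by
      have := Finset.mem_range.mp hk; omega
    have hfac : ((n.choose k : ℕ) : ℂ) * (k.factorial : ℂ) * ((n-k).factorial : ℂ)
        = (n.factorial : ℂ) := by exact_mod_cast Nat.choose_mul_factorial_mul_factorial hkn
    have hz : z^n = z^k * z^(n-k) := by rw [← pow_add]; congr 1; omega
    have h1 : ((k.factorial : ℕ) : ℂ) ≠ 0 := Nat.cast_ne_zero.mpr k.factorial_ne_zero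
    have h2 : (((n-k).factorial : ℕ) : ℂ) ≠ 0 := Nat.cast_ne_zero.mpr (n-k).factorial_ne_zero
    have h3 : ((n.factorial : ℕ) : ℂ) ≠ 0 := Nat.cast_ne_zero.mpr n.factorial_ne_zero
    simp only [hA, hB, hA', hB']
    rw [hz]
    push_cast
    field_simp
    ring_nf
    linear_combination (((e k : ℝ):ℂ) + ((e (n-k) : ℝ):ℂ)) * ((p:ℂ)^k * (q:ℂ)^(n-k)) * z^k * z^(n-k) * hfac
  have hs1 : Summable fun n => ∑ k ∈ Finset.range (n+1), A k * B (n-k) :=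
    (summable_norm_sum_mul_range_of_summable_norm hAn hBn).of_norm
  have hs2 : Summable fun n => ∑ k ∈ Finset.range (n+1), A' k * B' (n-k) :=
    (summable_norm_sum_mul_range_of_summable_norm hA'n hB'n).of_norm
  constructor
  · exact (hs1.add hs2).congr (fun n => (hkey n).symm)
  · rw [tsum_congr hkey, Summable.tsum_add hs1 hs2,
      ← tsum_mul_tsum_eq_tsum_sum_range_of_summable_norm hAn hBn,
      ← tsum_mul_tsum_eq_tsum_sum_range_of_summable_norm hA'n hB'n]
    have hBe : ∑' m, B m = Complex.exp ((q:ℝ) * z) := by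
      rw [exp_tsum]
    have hA'e : ∑' k, A' k = Complex.exp ((p:ℝ) * z) := by
      rw [exp_tsum]
    rw [hBe, hA'e]
    ring
-- assumes defs binomialMeasure, trieStep, IsTriePairFamily from proof.lean are above

lemma int_proj {p : ℝ} {μ : ℕ → Measure (ℕ × ℕ)} (hμ : IsTriePairFamily p μ)
    (pr : ℕ × ℕ → ℕ) (hpr : ∀ x : ℕ × ℕ, pr x ≤ x.1 + x.2) (j : ℕ) :
    Integrable (fun x : ℕ × ℕ => (pr x : ℝ)) (μ j) := by
  have h := hμ.moments j 1
  simp only [pow_one] at h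
  refine h.mono ((measurable_of_countable _).aestronglyMeasurable) (ae_of_all _ fun x => ?_)
  rw [Real.norm_eq_abs, Real.norm_eq_abs, abs_of_nonneg (by positivity),
    abs_of_nonneg (by positivity)]
  exact_mod_cast hpr x

lemma recur_expect (p : ℝ) (hp0 : 0 < p) (hp1 : p < 1)
    (μ : ℕ → Measure (ℕ × ℕ)) (hμ : IsTriePairFamily p μ)
    (pr : ℕ × ℕ → ℕ) (c : ℕ → ℕ)
    (hstep : ∀ (n : ℕ) (ω : ℕ × ((ℕ → ℕ × ℕ) × (ℕ → ℕ × ℕ))),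
      pr (trieStep n ω) = pr (ω.2.1 ω.1) + pr (ω.2.2 (n - ω.1)) + c n)
    (hpr : ∀ x : ℕ × ℕ, pr x ≤ x.1 + x.2)
    (n : ℕ) (hn : 2 ≤ n) :
    ∫ x, (pr x : ℝ) ∂ μ n
      = (∑ k ∈ Finset.range (n+1), ((n.choose k : ℝ) * p^k * (1-p)^(n-k)) *
          ((∫ x, (pr x : ℝ) ∂ μ k) + ∫ x, (pr x : ℝ) ∂ μ (n-k))) + c n := by
  classical
  obtain ⟨P, hP, hfst, hm1, hm2, hprod, hrec⟩ := hμ.recur n hn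
  haveI := hμ.prob
  haveI : IsProbabilityMeasure P := hP
  have hmeas1 : Measurable fun ω : ℕ × ((ℕ → ℕ × ℕ) × (ℕ → ℕ × ℕ)) => ω.2.1 :=
    measurable_fst.comp measurable_snd
  have hmeas2 : Measurable fun ω : ℕ × ((ℕ → ℕ × ℕ) × (ℕ → ℕ × ℕ)) => ω.2.2 :=
    measurable_snd.comp measurable_snd
  set ν₁ := P.map (fun ω : ℕ × ((ℕ → ℕ × ℕ) × (ℕ → ℕ × ℕ)) => ω.2.1) with hν₁
  set ν₂ := P.map (fun ω : ℕ × ((ℕ → ℕ × ℕ) × (ℕ → ℕ × ℕ)) => ω.2.2) with hν₂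
  haveI : IsProbabilityMeasure ν₁ := Measure.isProbabilityMeasure_map hmeas1.aemeasurable
  haveI : IsProbabilityMeasure ν₂ := Measure.isProbabilityMeasure_map hmeas2.aemeasurable
  haveI hPM : IsProbabilityMeasure (binomialMeasure n p) := by
    rw [← hfst]; exact Measure.isProbabilityMeasure_map measurable_fst.aemeasurable
  set ρ := ν₁.prod ν₂ with hρ
  have hprod' : P = (binomialMeasure n p).prod ρ := by rw [← hfst]; exact hprod
  -- laws of the coordinates under ρ
  have law1 : ∀ j, ρ.map (fun x : (ℕ → ℕ × ℕ) × (ℕ → ℕ × ℕ) => x.1 j) = μ j := by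
    intro j
    have heq : (fun x : (ℕ → ℕ × ℕ) × (ℕ → ℕ × ℕ) => x.1 j)
        = (fun g : ℕ → ℕ × ℕ => g j) ∘ Prod.fst := rfl
    rw [heq, ← Measure.map_map (measurable_pi_apply j) measurable_fst, hρ,
      Measure.map_fst_prod]
    simp only [measure_univ, one_smul]
    rw [hν₁, Measure.map_map (measurable_pi_apply j) hmeas1]
    exact hm1 j
  have law2 : ∀ j, ρ.map (fun x : (ℕ → ℕ × ℕ) × (ℕ → ℕ × ℕ) => x.2 j) = μ j := by
    intro j
    have heq : (fun x : (ℕ → ℕ × ℕ) × (ℕ → ℕ × ℕ) => x.2 j)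
        = (fun g : ℕ → ℕ × ℕ => g j) ∘ Prod.snd := rfl
    rw [heq, ← Measure.map_map (measurable_pi_apply j) measurable_snd, hρ,
      Measure.map_snd_prod]
    simp only [measure_univ, one_smul]
    rw [hν₂, Measure.map_map (measurable_pi_apply j) hmeas2]
    exact hm2 j
  have hmx1 : ∀ j, Measurable fun x : (ℕ → ℕ × ℕ) × (ℕ → ℕ × ℕ) => x.1 j :=
    fun j => (measurable_pi_apply j).comp measurable_fst
  have hmx2 : ∀ j, Measurable fun x : (ℕ → ℕ × ℕ) × (ℕ → ℕ × ℕ) => x.2 j :=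
    fun j => (measurable_pi_apply j).comp measurable_snd
  -- integrability of coordinate projections under ρ
  have hintρ1 : ∀ j, Integrable (fun x : (ℕ → ℕ × ℕ) × (ℕ → ℕ × ℕ) => (pr (x.1 j) : ℝ)) ρ := by
    intro j
    have h := int_proj hμ pr hpr j
    rw [← law1 j] at h
    exact (integrable_map_measure (measurable_of_countable _).aestronglyMeasurable
      (hmx1 j).aemeasurable).mp h
  have hintρ2 : ∀ j, Integrable (fun x : (ℕ → ℕ × ℕ) × (ℕ → ℕ × ℕ) => (pr (x.2 j) : ℝ)) ρ := by
    intro j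
    have h := int_proj hμ pr hpr j
    rw [← law2 j] at h
    exact (integrable_map_measure (measurable_of_countable _).aestronglyMeasurable
      (hmx2 j).aemeasurable).mp h
  -- values of the coordinate integrals
  have val1 : ∀ j, ∫ x : (ℕ → ℕ × ℕ) × (ℕ → ℕ × ℕ), (pr (x.1 j) : ℝ) ∂ρ
      = ∫ x, (pr x : ℝ) ∂ μ j := by
    intro j
    rw [← law1 j, integral_map (hmx1 j).aemeasurable
      (measurable_of_countable _).aestronglyMeasurable]
  have val2 : ∀ j, ∫ x : (ℕ → ℕ × ℕ) × (ℕ → ℕ × ℕ), (pr (x.2 j) : ℝ) ∂ρ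
      = ∫ x, (pr x : ℝ) ∂ μ j := by
    intro j
    rw [← law2 j, integral_map (hmx2 j).aemeasurable
      (measurable_of_countable _).aestronglyMeasurable]
  -- measurability of trieStep
  have hstepmeas : Measurable (trieStep n) := by
    have heq : trieStep n = (fun ω : ((ℕ → ℕ × ℕ) × (ℕ → ℕ × ℕ)) × ℕ => trieStep n (ω.2, ω.1))
        ∘ Prod.swap := rfl
    rw [heq]
    refine (measurable_from_prod_countable_left fun k => ?_).comp measurable_swap
    have h1 : Measurable fun x : (ℕ → ℕ × ℕ) × (ℕ → ℕ × ℕ) => (x.1 k, x.2 (n - k)) :=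
      ((measurable_pi_apply k).comp measurable_fst).prodMk
        ((measurable_pi_apply (n-k)).comp measurable_snd)
    exact (measurable_of_countable
      (fun y : (ℕ × ℕ) × (ℕ × ℕ) => (y.1.1 + y.2.1 + 1, y.1.2 + y.2.2 + n))).comp h1
  have hFmeas : Measurable fun ω : ℕ × ((ℕ → ℕ × ℕ) × (ℕ → ℕ × ℕ)) => (pr (trieStep n ω) : ℝ) :=
    (measurable_of_countable (fun m : ℕ => (m : ℝ))).comp
      ((measurable_of_countable pr).comp hstepmeas)
  -- rewrite target
  have e1 : ∫ x, (pr x : ℝ) ∂ μ n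
      = ∫ ω, (pr (trieStep n ω) : ℝ) ∂ P := by
    rw [hrec, integral_map hstepmeas.aemeasurable
      (measurable_of_countable _).aestronglyMeasurable]
  -- integrable bound over the product
  have hgmeas : Measurable fun x : (ℕ → ℕ × ℕ) × (ℕ → ℕ × ℕ) =>
      ((∑ j ∈ Finset.range (n+1), (pr (x.1 j) : ℝ)) + (∑ j ∈ Finset.range (n+1), (pr (x.2 j) : ℝ))
        + (c n : ℝ)) := by
    refine Measurable.add (Measurable.add ?_ ?_) measurable_const
    · exact Finset.measurable_sum _ (fun j _ =>
        (measurable_of_countable (fun y : ℕ × ℕ => (pr y : ℝ))).comp (hmx1 j))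
    · exact Finset.measurable_sum _ (fun j _ =>
        (measurable_of_countable (fun y : ℕ × ℕ => (pr y : ℝ))).comp (hmx2 j))
  have hgint : Integrable (fun x : (ℕ → ℕ × ℕ) × (ℕ → ℕ × ℕ) =>
      ((∑ j ∈ Finset.range (n+1), (pr (x.1 j) : ℝ)) + (∑ j ∈ Finset.range (n+1), (pr (x.2 j) : ℝ))
        + (c n : ℝ))) ρ := by
    refine Integrable.add (Integrable.add ?_ ?_) (integrable_const _)
    · exact integrable_finset_sum _ (fun j _ => hintρ1 j)
    · exact integrable_finset_sum _ (fun j _ => hintρ2 j)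
  have hmapsnd : ((binomialMeasure n p).prod ρ).map Prod.snd = ρ := by
    rw [Measure.map_snd_prod]
    simp [measure_univ]
  have hgint' : Integrable ((fun x : (ℕ → ℕ × ℕ) × (ℕ → ℕ × ℕ) =>
      ((∑ j ∈ Finset.range (n+1), (pr (x.1 j) : ℝ)) + (∑ j ∈ Finset.range (n+1), (pr (x.2 j) : ℝ))
        + (c n : ℝ))) ∘ Prod.snd) ((binomialMeasure n p).prod ρ) := by
    refine (integrable_map_measure ?_ measurable_snd.aemeasurable).mp ?_
    · rw [hmapsnd]; exact hgmeas.aestronglyMeasurable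
    · rw [hmapsnd]; exact hgint
  have hae : ∀ᵐ ω : ℕ × ((ℕ → ℕ × ℕ) × (ℕ → ℕ × ℕ)) ∂((binomialMeasure n p).prod ρ), ω.1 ≤ n := by
    rw [ae_iff]
    have hset : {ω : ℕ × ((ℕ → ℕ × ℕ) × (ℕ → ℕ × ℕ)) | ¬ ω.1 ≤ n}
        = Prod.fst ⁻¹' {b : ℕ | ¬ b ≤ n} := rfl
    rw [hset, ← Measure.map_apply measurable_fst (MeasurableSet.of_discrete),
      Measure.map_fst_prod]
    simp only [measure_univ, one_smul]
    unfold binomialMeasure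
    rw [Measure.coe_finset_sum]
    simp only [Finset.sum_apply, Measure.smul_apply, smul_eq_mul]
    refine Finset.sum_eq_zero fun k hk => ?_
    rw [Measure.dirac_apply' _ (MeasurableSet.of_discrete)]
    have hkn : k ≤ n := by have := Finset.mem_range.mp hk; omega
    simp [Set.indicator, hkn]
  have hint : Integrable (fun ω : ℕ × ((ℕ → ℕ × ℕ) × (ℕ → ℕ × ℕ)) => (pr (trieStep n ω) : ℝ))
      ((binomialMeasure n p).prod ρ) := by
    refine hgint'.mono' hFmeas.aestronglyMeasurable ?_
    filter_upwards [hae] with ω hω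
    rw [hstep n ω, Real.norm_eq_abs, abs_of_nonneg (by positivity)]
    push_cast
    have hb1 : (pr (ω.2.1 ω.1) : ℝ) ≤ ∑ j ∈ Finset.range (n+1), (pr (ω.2.1 j) : ℝ) := by
      refine Finset.single_le_sum (f := fun j => (pr (ω.2.1 j) : ℝ))
        (fun j _ => by positivity) ?_
      exact Finset.mem_range.mpr (by omega)
    have hb2 : (pr (ω.2.2 (n - ω.1)) : ℝ) ≤ ∑ j ∈ Finset.range (n+1), (pr (ω.2.2 j) : ℝ) := by
      refine Finset.single_le_sum (f := fun j => (pr (ω.2.2 j) : ℝ))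
        (fun j _ => by positivity) ?_
      exact Finset.mem_range.mpr (by omega)
    simp only [Function.comp_apply]
    linarith
  -- main computation
  rw [e1, hprod', integral_prod _ hint]
  -- inner integral value
  have hinner : ∀ k : ℕ, (∫ x : (ℕ → ℕ × ℕ) × (ℕ → ℕ × ℕ), (pr (trieStep n (k, x)) : ℝ) ∂ρ)
      = (∫ x, (pr x : ℝ) ∂ μ k) + (∫ x, (pr x : ℝ) ∂ μ (n-k)) + (c n : ℝ) := by
    intro k
    have heq : ∀ x : (ℕ → ℕ × ℕ) × (ℕ → ℕ × ℕ), (pr (trieStep n (k, x)) : ℝ)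
        = (pr (x.1 k) : ℝ) + (pr (x.2 (n-k)) : ℝ) + (c n : ℝ) := by
      intro x
      have := hstep n (k, x)
      rw [this]; push_cast; ring
    calc ∫ x : (ℕ → ℕ × ℕ) × (ℕ → ℕ × ℕ), (pr (trieStep n (k, x)) : ℝ) ∂ρ
        = ∫ x : (ℕ → ℕ × ℕ) × (ℕ → ℕ × ℕ),
            ((pr (x.1 k) : ℝ) + (pr (x.2 (n-k)) : ℝ) + (c n : ℝ)) ∂ρ :=
          integral_congr_ae (ae_of_all _ heq)
      _ = (∫ x : (ℕ → ℕ × ℕ) × (ℕ → ℕ × ℕ),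
            ((pr (x.1 k) : ℝ) + (pr (x.2 (n-k)) : ℝ)) ∂ρ) + ∫ _x, (c n : ℝ) ∂ρ :=
          integral_add ((hintρ1 k).add (hintρ2 (n-k))) (integrable_const _)
      _ = (∫ x : (ℕ → ℕ × ℕ) × (ℕ → ℕ × ℕ), (pr (x.1 k) : ℝ) ∂ρ)
            + (∫ x : (ℕ → ℕ × ℕ) × (ℕ → ℕ × ℕ), (pr (x.2 (n-k)) : ℝ) ∂ρ)
            + ∫ _x, (c n : ℝ) ∂ρ := by
          rw [integral_add (hintρ1 k) (hintρ2 (n-k))]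
      _ = (∫ x, (pr x : ℝ) ∂ μ k) + (∫ x, (pr x : ℝ) ∂ μ (n-k)) + (c n : ℝ) := by
          rw [val1 k, val2 (n-k), integral_const]
          simp [measure_univ]
  -- outer integral over the binomial measure
  have houter : ∀ k ∈ Finset.range (n+1), Integrable
      (fun b : ℕ => ∫ x : (ℕ → ℕ × ℕ) × (ℕ → ℕ × ℕ), (pr (trieStep n (b, x)) : ℝ) ∂ρ)
      ((ENNReal.ofReal ((n.choose k : ℝ) * p ^ k * (1 - p) ^ (n - k))) • Measure.dirac k) := by
    intro k _
    refine Integrable.smul_measure ?_ ENNReal.ofReal_ne_top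
    exact (integrable_const _).congr (ae_eq_dirac _).symm
  unfold binomialMeasure
  rw [integral_finset_sum_measure houter]
  have hterm : ∀ k ∈ Finset.range (n+1),
      (∫ b : ℕ, (∫ x : (ℕ → ℕ × ℕ) × (ℕ → ℕ × ℕ), (pr (trieStep n (b, x)) : ℝ) ∂ρ)
        ∂((ENNReal.ofReal ((n.choose k : ℝ) * p ^ k * (1 - p) ^ (n - k))) • Measure.dirac k))
      = ((n.choose k : ℝ) * p^k * (1-p)^(n-k)) *
          ((∫ x, (pr x : ℝ) ∂ μ k) + (∫ x, (pr x : ℝ) ∂ μ (n-k)) + (c n : ℝ)) := by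
    intro k _
    rw [integral_smul_measure, integral_dirac, hinner k,
      ENNReal.toReal_ofReal (mul_nonneg (mul_nonneg (Nat.cast_nonneg _) (pow_nonneg hp0.le k)) (pow_nonneg (by linarith) (n-k))), smul_eq_mul]
  rw [Finset.sum_congr rfl hterm]
  have hW1 : ∑ k ∈ Finset.range (n+1), (n.choose k : ℝ) * p^k * (1-p)^(n-k) = 1 := sum_w p n
  rw [Finset.sum_congr rfl (fun k _ => show
      ((n.choose k : ℝ) * p^k * (1-p)^(n-k)) *
        ((∫ x, (pr x : ℝ) ∂ μ k) + (∫ x, (pr x : ℝ) ∂ μ (n-k)) + (c n : ℝ))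
      = ((n.choose k : ℝ) * p^k * (1-p)^(n-k)) *
        ((∫ x, (pr x : ℝ) ∂ μ k) + (∫ x, (pr x : ℝ) ∂ μ (n-k)))
        + ((n.choose k : ℝ) * p^k * (1-p)^(n-k)) * (c n : ℝ) by ring),
    Finset.sum_add_distrib, ← Finset.sum_mul, hW1, one_mul]
/-- functional equations for the Poisson generating functions of the means. -/
theorem stmt8 (p : ℝ) (hp0 : 0 < p) (hp1 : p < 1) (q : ℝ) (hq : q = 1 - p)
    (μ : ℕ → Measure (ℕ × ℕ)) (hμ : IsTriePairFamily p μ) :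
    ∀ z : ℂ,
      pgfS μ z = pgfS μ ((p : ℂ) * z) + pgfS μ ((q : ℂ) * z)
        + 1 - (1 + z) * Complex.exp (-z) ∧
      pgfK μ z = pgfK μ ((p : ℂ) * z) + pgfK μ ((q : ℂ) * z)
        + z * (1 - Complex.exp (-z)) := by
  subst hq
  intro z
  have hq0 : 0 < 1 - p := by linarith
  have hpq0 : 0 < p * (1 - p) := mul_pos hp0 hq0
  -- recurrences for the means
  have recS : ∀ n, 2 ≤ n → eS μ n
      = (∑ k ∈ Finset.range (n+1), ((n.choose k : ℝ) * p^k * (1-p)^(n-k)) *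
          (eS μ k + eS μ (n-k))) + 1 := by
    intro n hn
    have h := recur_expect p hp0 hp1 μ hμ Prod.fst (fun _ => 1)
      (fun n ω => rfl) (fun x => Nat.le_add_right _ _) n hn
    simpa [eS] using h
  have recK : ∀ n, 2 ≤ n → eK μ n
      = (∑ k ∈ Finset.range (n+1), ((n.choose k : ℝ) * p^k * (1-p)^(n-k)) *
          (eK μ k + eK μ (n-k))) + (n : ℝ) := by
    intro n hn
    have h := recur_expect p hp0 hp1 μ hμ Prod.snd (fun m => m)
      (fun n ω => rfl) (fun x => Nat.le_add_left _ _) n hn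
    simpa [eK] using h
  -- initial values and nonnegativity
  have hS0 : eS μ 0 = 0 := by unfold eS; rw [hμ.init0, integral_dirac]; simp
  have hS1 : eS μ 1 = 0 := by unfold eS; rw [hμ.init1, integral_dirac]; simp
  have hK0 : eK μ 0 = 0 := by unfold eK; rw [hμ.init0, integral_dirac]; simp
  have hK1 : eK μ 1 = 0 := by unfold eK; rw [hμ.init1, integral_dirac]; simp
  have hSnn : ∀ n, 0 ≤ eS μ n := by
    intro n; unfold eS; exact integral_nonneg fun x => Nat.cast_nonneg _
  have hKnn : ∀ n, 0 ≤ eK μ n := by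
    intro n; unfold eK; exact integral_nonneg fun x => Nat.cast_nonneg _
  -- growth bounds
  set a : ℝ := 2 / (p * (1-p)) with hadef
  have ha0 : 0 ≤ a := (div_pos two_pos hpq0).le
  have hbdS : ∀ n, eS μ n ≤ a ^ n :=
    growth_bound p hp0 hp1 (eS μ) (fun _ => 1) hSnn hS0 hS1
      (fun n hn => by exact_mod_cast Nat.one_le_cast.mpr (by omega)) recS
  have hbdK : ∀ n, eK μ n ≤ a ^ n :=
    growth_bound p hp0 hp1 (eK μ) (fun n => (n:ℝ)) hKnn hK0 hK1
      (fun n hn => le_refl _) recK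
  -- Cauchy product identities
  have hcS := cauchy_piece p (1-p) hp0.le hq0.le (eS μ) hSnn a ha0 hbdS z
  have hcK := cauchy_piece p (1-p) hp0.le hq0.le (eK μ) hKnn a ha0 hbdK z
  -- summabilities
  have hsumS : Summable (fun n : ℕ => ((eS μ n : ℝ):ℂ) * z^n / (n.factorial : ℂ)) :=
    (summable_aux (eS μ) a hSnn hbdS z).of_norm
  have hsumK : Summable (fun n : ℕ => ((eK μ n : ℝ):ℂ) * z^n / (n.factorial : ℂ)) :=
    (summable_aux (eK μ) a hKnn hbdK z).of_norm
  have hsumE : Summable (fun n : ℕ => z^n / (n.factorial:ℂ)) := summable_exp_series z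
  have hsumN : Summable (fun n : ℕ => (n:ℂ) * z^n / (n.factorial:ℂ)) := (nat_tsum z).1
  -- correction series
  have hDS : Summable (fun n : ℕ => if n = 0 then (1:ℂ) else if n = 1 then z else 0) := by
    refine summable_of_ne_finset_zero (s := {0, 1}) fun b hb => ?_
    simp only [Finset.mem_insert, Finset.mem_singleton, not_or] at hb
    simp [hb.1, hb.2]
  have hDSval : ∑' n : ℕ, (if n = 0 then (1:ℂ) else if n = 1 then z else 0) = 1 + z := by
    rw [tsum_eq_sum (s := {0, 1}) (fun b hb => by
      simp only [Finset.mem_insert, Finset.mem_singleton, not_or] at hb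
      simp [hb.1, hb.2])]
    norm_num
  have hDK : Summable (fun n : ℕ => if n = 1 then z else (0:ℂ)) := by
    refine summable_of_ne_finset_zero (s := {1}) fun b hb => ?_
    simp only [Finset.mem_singleton] at hb
    simp [hb]
  have hDKval : ∑' n : ℕ, (if n = 1 then z else (0:ℂ)) = z := by
    rw [tsum_eq_sum (s := {1}) (fun b hb => by
      simp only [Finset.mem_singleton] at hb; simp [hb])]
    norm_num
  -- per-term identities
  have keyS : ∀ n : ℕ, ((eS μ n : ℝ):ℂ) * z^n / (n.factorial : ℂ)
      = ((∑ k ∈ Finset.range (n+1), ((n.choose k : ℝ) * p^k * (1-p)^(n-k)) *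
            (eS μ k + eS μ (n-k)) : ℝ):ℂ) * z^n / (n.factorial : ℂ)
        + z^n / (n.factorial : ℂ)
        - (if n = 0 then 1 else if n = 1 then z else 0) := by
    intro n
    match n with
    | 0 => simp [hS0]
    | 1 => simp [Finset.sum_range_succ, hS0, hS1]
    | (m+2) =>
      have h := recS (m+2) (by omega)
      rw [h]
      have hif : (if (m+2 : ℕ) = 0 then (1:ℂ) else if (m+2 : ℕ) = 1 then z else 0) = 0 := by simp
      rw [hif]
      push_cast
      ring
  have keyK : ∀ n : ℕ, ((eK μ n : ℝ):ℂ) * z^n / (n.factorial : ℂ)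
      = ((∑ k ∈ Finset.range (n+1), ((n.choose k : ℝ) * p^k * (1-p)^(n-k)) *
            (eK μ k + eK μ (n-k)) : ℝ):ℂ) * z^n / (n.factorial : ℂ)
        + (n:ℂ) * z^n / (n.factorial : ℂ)
        - (if n = 1 then z else 0) := by
    intro n
    match n with
    | 0 => simp [hK0]
    | 1 => simp [Finset.sum_range_succ, hK0, hK1]
    | (m+2) =>
      have h := recK (m+2) (by omega)
      rw [h]
      have hif : (if (m+2 : ℕ) = 1 then z else (0:ℂ)) = 0 := by simp
      rw [hif]
      push_cast
      ring
  -- tsum computations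
  have htsumS : ∑' n : ℕ, ((eS μ n : ℝ):ℂ) * z^n / (n.factorial : ℂ)
      = Complex.exp (((1-p : ℝ)) * z) * (∑' k : ℕ, ((eS μ k : ℝ):ℂ) * ((p:ℝ) * z)^k / (k.factorial : ℂ))
        + Complex.exp (((p:ℝ)) * z) * (∑' k : ℕ, ((eS μ k : ℝ):ℂ) * (((1-p):ℝ) * z)^k / (k.factorial : ℂ))
        + Complex.exp z - (1 + z) := by
    rw [tsum_congr keyS, Summable.tsum_sub (hcS.1.add hsumE) hDS, Summable.tsum_add hcS.1 hsumE, hcS.2,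
      hDSval, ← exp_tsum]
  have htsumK : ∑' n : ℕ, ((eK μ n : ℝ):ℂ) * z^n / (n.factorial : ℂ)
      = Complex.exp (((1-p : ℝ)) * z) * (∑' k : ℕ, ((eK μ k : ℝ):ℂ) * ((p:ℝ) * z)^k / (k.factorial : ℂ))
        + Complex.exp (((p:ℝ)) * z) * (∑' k : ℕ, ((eK μ k : ℝ):ℂ) * (((1-p):ℝ) * z)^k / (k.factorial : ℂ))
        + z * Complex.exp z - z := by
    rw [tsum_congr keyK, Summable.tsum_sub (hcK.1.add hsumN) hDK, Summable.tsum_add hcK.1 hsumN, hcK.2,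
      hDKval, (nat_tsum z).2]
  -- exponential identities
  have h3 : Complex.exp (-z) * Complex.exp z = 1 := by
    rw [← Complex.exp_add]; simp
  have h1 : Complex.exp (-z) * Complex.exp (((1-p : ℝ)) * z) = Complex.exp (-((p:ℝ) * z)) := by
    rw [← Complex.exp_add]; congr 1; push_cast; ring
  have h2 : Complex.exp (-z) * Complex.exp (((p:ℝ)) * z) = Complex.exp (-(((1-p):ℝ) * z)) := by
    rw [← Complex.exp_add]; congr 1; push_cast; ring
  constructor
  · show pgfS μ z = _
    unfold pgfS
    rw [htsumS]
    linear_combination (∑' k : ℕ, ((eS μ k : ℝ):ℂ) * ((p:ℝ) * z)^k / (k.factorial : ℂ)) * h1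
      + (∑' k : ℕ, ((eS μ k : ℝ):ℂ) * (((1-p):ℝ) * z)^k / (k.factorial : ℂ)) * h2 + h3
  · show pgfK μ z = _
    unfold pgfK
    rw [htsumK]
    linear_combination (∑' k : ℕ, ((eK μ k : ℝ):ℂ) * ((p:ℝ) * z)^k / (k.factorial : ℂ)) * h1
      + (∑' k : ℕ, ((eK μ k : ℝ):ℂ) * (((1-p):ℝ) * z)^k / (k.factorial : ℂ)) * h2 + z * h3
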